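/- arXiv:2507.10988 — 7 statements merged into one kernel-verified Lean document; each statement's English description precedes it below -/
import Mathlib

section
/- Let 0 < ℓ ≤ 1, let λ ≥ 0, and let j be a natural number with j ≥ ⌊√λ⌋ + 1. Set w = arcsinh(1/sinh(ℓ/2)). Suppose u : ℝ → ℝ is twice differentiable and satisfies u''(ρ) = (1/4 − λ + (1/4 + 4π²j²/ℓ²)·(1/cosh²ρ))·u(ρ) for all ρ ∈ [0, w], with initial conditions u(0) = 0 and u'(0) = 1. Then ∫₀^{w−1} u(ρ)² dρ ≤ (4/e²) · ∫₀^{w} u(ρ)² dρ. -/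
open Real

set_option maxHeartbeats 1000000 in
/-- Let `0 < ℓ ≤ 1`, `λ ≥ 0`, and `j ≥ ⌊√λ⌋ + 1` a natural number.  Set
`w = arcsinh(1/sinh(ℓ/2))`.  If `u : ℝ → ℝ` is twice differentiable and satisfies
`u'' = (1/4 − λ + (1/4 + 4π²j²/ℓ²)/cosh²ρ) · u` on `[0, w]`, with `u 0 = 0` and
`u' 0 = 1`, then `∫₀^{w−1} u² ≤ (4/e²) ∫₀^{w} u²`. -/
theorem stmt0 (ℓ lam : ℝ) (hℓ0 : 0 < ℓ) (hℓ1 : ℓ ≤ 1) (hlam : 0 ≤ lam)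
    (j : ℕ) (hj : j ≥ ⌊Real.sqrt lam⌋₊ + 1)
    (w : ℝ) (hw : w = Real.arsinh (1 / Real.sinh (ℓ / 2)))
    (u : ℝ → ℝ) (hu : Differentiable ℝ u) (hu' : Differentiable ℝ (deriv u))
    (hode : ∀ ρ ∈ Set.Icc 0 w,
      deriv (deriv u) ρ =
        (1 / 4 - lam + (1 / 4 + 4 * Real.pi ^ 2 * (j : ℝ) ^ 2 / ℓ ^ 2)
          * (1 / Real.cosh ρ ^ 2)) * u ρ)
    (h0 : u 0 = 0) (h1 : deriv u 0 = 1) :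
    ∫ ρ in (0:ℝ)..(w - 1), u ρ ^ 2 ≤ 4 / Real.exp 1 ^ 2 * ∫ ρ in (0:ℝ)..w, u ρ ^ 2 := by
  -- numerics about exp(1/2)
  set a := Real.exp (1/2) with ha
  have ha0 : (0:ℝ) < a := Real.exp_pos _
  have ha2 : a * a = Real.exp 1 := by rw [← Real.exp_add]; norm_num
  have haU : a < 1.65 := by nlinarith [Real.exp_one_lt_d9]
  have haL : 1.6 < a := by nlinarith [Real.exp_one_gt_d9]
  have hl2 : (0:ℝ) < ℓ / 2 := by linarith
  have hs0 : 0 < Real.sinh (ℓ / 2) := Real.sinh_pos_iff.mpr hl2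
  -- w ≥ 1
  have hainv : a⁻¹ < 0.625 ∧ 0.6 < a⁻¹ := by
    constructor
    · rw [inv_lt_comm₀ (by linarith) (by norm_num)]; norm_num; linarith
    · rw [lt_inv_comm₀ (by norm_num) ha0]; norm_num; linarith
  have hsinh1 : Real.sinh 1 ≤ 1.36 := by
    rw [Real.sinh_eq]
    have := Real.exp_pos (-1)
    nlinarith [Real.exp_one_lt_d9]
  have hsinhhalf : Real.sinh (1/2) ≤ 0.53 := by
    rw [Real.sinh_eq, Real.exp_neg, ← ha]
    nlinarith [hainv.2]
  have hw1 : 1 ≤ w := by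
    have hmono : Real.sinh (ℓ/2) ≤ Real.sinh (1/2) := Real.sinh_le_sinh.mpr (by linarith)
    have h1pos : 0 < Real.sinh 1 := Real.sinh_pos_iff.mpr one_pos
    have hle : Real.sinh 1 ≤ 1 / Real.sinh (ℓ/2) := by
      rw [le_div_iff₀ hs0]; nlinarith
    calc (1:ℝ) = Real.arsinh (Real.sinh 1) := (Real.arsinh_sinh 1).symm
      _ ≤ Real.arsinh (1 / Real.sinh (ℓ/2)) := Real.arsinh_le_arsinh.mpr hle
      _ = w := hw.symm
  have hw0 : (0:ℝ) ≤ w := by linarith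
  -- the potential is ≥ 1 on [0, w]
  have hV : ∀ ρ ∈ Set.Icc (0:ℝ) w,
      1 ≤ 1 / 4 - lam + (1 / 4 + 4 * Real.pi ^ 2 * (j : ℝ) ^ 2 / ℓ ^ 2)
          * (1 / Real.cosh ρ ^ 2) := by
    intro ρ hρ
    have hcρ : Real.cosh ρ ≤ Real.cosh w := by
      rw [Real.cosh_le_cosh, abs_of_nonneg hρ.1, abs_of_nonneg hw0]; exact hρ.2
    have hsw : Real.sinh w = 1 / Real.sinh (ℓ / 2) := by rw [hw, Real.sinh_arsinh]
    have hcw : Real.cosh w ^ 2 * Real.sinh (ℓ/2) ^ 2 = Real.cosh (ℓ/2) ^ 2 := by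
      rw [Real.cosh_sq, hsw, Real.cosh_sq]; field_simp; ring
    have hsl : ℓ / 2 ≤ Real.sinh (ℓ/2) := le_of_lt (Real.self_lt_sinh_iff.mpr hl2)
    have hchalf : Real.cosh (ℓ/2) ^ 2 ≤ 9/4 := by
      have hm : Real.cosh (ℓ/2) ≤ Real.cosh (1/2) := by
        rw [Real.cosh_le_cosh, abs_of_nonneg (le_of_lt hl2), abs_of_nonneg (by norm_num : (0:ℝ) ≤ 1/2)]
        linarith
      have hhalf : Real.cosh (1/2) ≤ 3/2 := by
        rw [Real.cosh_eq, Real.exp_neg, ← ha]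
        linarith [hainv.1]
      calc Real.cosh (ℓ/2) ^ 2 ≤ (3/2) ^ 2 :=
            pow_le_pow_left₀ (le_of_lt (Real.cosh_pos _)) (hm.trans hhalf) 2
        _ = 9/4 := by norm_num
    have hcoshρ : (0:ℝ) < Real.cosh ρ := Real.cosh_pos _
    have hcoshw : (0:ℝ) < Real.cosh w := Real.cosh_pos _
    have key : Real.cosh ρ ^ 2 * ℓ ^ 2 ≤ 9 := by
      have hρ2 : Real.cosh ρ ^ 2 ≤ Real.cosh w ^ 2 :=
        pow_le_pow_left₀ (le_of_lt hcoshρ) hcρ 2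
      have h2 : Real.cosh ρ ^ 2 * Real.sinh (ℓ/2) ^ 2 ≤ 9/4 := by
        have := mul_le_mul_of_nonneg_right hρ2 (sq_nonneg (Real.sinh (ℓ/2)))
        linarith
      have h3 : ℓ ^ 2 ≤ 4 * Real.sinh (ℓ/2) ^ 2 := by nlinarith [hsl, hl2]
      have h4 := mul_le_mul_of_nonneg_left h3 (sq_nonneg (Real.cosh ρ))
      linarith only [h2, h4]
    have hinv : ℓ ^ 2 / 9 ≤ 1 / Real.cosh ρ ^ 2 := by
      rw [div_le_div_iff₀ (by norm_num) (by positivity)]; linarith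
    have hjl : lam < (j:ℝ) ^ 2 := by
      have h3 : Real.sqrt lam < (j:ℝ) := by
        calc Real.sqrt lam < (⌊Real.sqrt lam⌋₊ : ℝ) + 1 := Nat.lt_floor_add_one _
          _ ≤ (j:ℝ) := by exact_mod_cast hj
      nlinarith [Real.sq_sqrt hlam, Real.sqrt_nonneg lam]
    have hj1 : (1:ℝ) ≤ (j:ℝ) := by
      have : 1 ≤ j := le_trans (Nat.le_add_left 1 _) hj
      exact_mod_cast this
    have hπ : 3 < Real.pi := Real.pi_gt_three
    have hterm : 4 * (j:ℝ) ^ 2 ≤ (1 / 4 + 4 * Real.pi ^ 2 * (j : ℝ) ^ 2 / ℓ ^ 2)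
        * (1 / Real.cosh ρ ^ 2) := by
      have h4 : 4 * Real.pi ^ 2 * (j:ℝ) ^ 2 / ℓ ^ 2 * (ℓ ^ 2 / 9)
          = 4 * Real.pi ^ 2 * (j:ℝ) ^ 2 / 9 := by field_simp
      have hB : 0 ≤ 4 * Real.pi ^ 2 * (j:ℝ) ^ 2 / ℓ ^ 2 := by positivity
      have h9 : (9:ℝ) ≤ Real.pi ^ 2 := by nlinarith [hπ]
      have hπ2 : (9:ℝ) * (j:ℝ) ^ 2 ≤ Real.pi ^ 2 * (j:ℝ) ^ 2 :=
        mul_le_mul_of_nonneg_right h9 (sq_nonneg _)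
      calc 4 * (j:ℝ) ^ 2 ≤ 4 * Real.pi ^ 2 * (j:ℝ) ^ 2 / 9 := by linarith
        _ = 4 * Real.pi ^ 2 * (j:ℝ) ^ 2 / ℓ ^ 2 * (ℓ ^ 2 / 9) := h4.symm
        _ ≤ (1 / 4 + 4 * Real.pi ^ 2 * (j : ℝ) ^ 2 / ℓ ^ 2) * (1 / Real.cosh ρ ^ 2) := by
            apply mul_le_mul (by linarith) hinv (by positivity) (by positivity)
    nlinarith
  -- u' > 0 on [0, w]
  have hu'pos : ∀ ρ ∈ Set.Icc (0:ℝ) w, 0 < deriv u ρ := by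
    by_contra hcon
    push_neg at hcon
    obtain ⟨t0, ht0mem, ht0⟩ := hcon
    set Z := Set.Icc (0:ℝ) w ∩ deriv u ⁻¹' Set.Iic 0 with hZ
    have hZne : Z.Nonempty := ⟨t0, ht0mem, ht0⟩
    have hZclosed : IsClosed Z :=
      isClosed_Icc.inter (isClosed_Iic.preimage hu'.continuous)
    have hZbdd : BddBelow Z := ⟨0, fun x hx => hx.1.1⟩
    set t := sInf Z with htdef
    have htZ : t ∈ Z := hZclosed.csInf_mem hZne hZbdd
    have ht0' : 0 < t := by
      rcases eq_or_lt_of_le htZ.1.1 with h | h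
      · exfalso
        have h2 : deriv u t ≤ 0 := htZ.2
        rw [← h, h1] at h2; linarith
      · exact h
    have hmono_u : MonotoneOn u (Set.Icc 0 t) := by
      apply monotoneOn_of_deriv_nonneg (convex_Icc _ _) hu.continuous.continuousOn
        hu.differentiableOn
      intro x hx
      rw [interior_Icc] at hx
      by_contra hneg
      push_neg at hneg
      have hxZ : x ∈ Z := ⟨⟨le_of_lt hx.1, le_trans (le_of_lt hx.2) htZ.1.2⟩, le_of_lt hneg⟩
      exact absurd (csInf_le hZbdd hxZ) (not_le.mpr hx.2)
    have hu_nn : ∀ s ∈ Set.Icc (0:ℝ) t, 0 ≤ u s := by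
      intro s hs
      have := hmono_u ⟨le_refl 0, le_of_lt ht0'⟩ hs hs.1
      rwa [h0] at this
    have hmono_u' : MonotoneOn (deriv u) (Set.Icc 0 t) := by
      apply monotoneOn_of_deriv_nonneg (convex_Icc _ _) hu'.continuous.continuousOn
        hu'.differentiableOn
      intro x hx
      rw [interior_Icc] at hx
      have hxw : x ∈ Set.Icc (0:ℝ) w := ⟨le_of_lt hx.1, le_trans (le_of_lt hx.2) htZ.1.2⟩
      rw [hode x hxw]
      have hVx := hV x hxw
      have hux := hu_nn x ⟨le_of_lt hx.1, le_of_lt hx.2⟩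
      nlinarith
    have hge : (1:ℝ) ≤ deriv u t := by
      rw [← h1]
      exact hmono_u' ⟨le_refl 0, le_of_lt ht0'⟩ ⟨le_of_lt ht0', le_refl t⟩ (le_of_lt ht0')
    have hfin : deriv u t ≤ 0 := htZ.2
    linarith
  -- u ≥ 0 on [0, w]
  have humono : MonotoneOn u (Set.Icc 0 w) := by
    apply monotoneOn_of_deriv_nonneg (convex_Icc _ _) hu.continuous.continuousOn
      hu.differentiableOn
    intro x hx
    rw [interior_Icc] at hx
    exact le_of_lt (hu'pos x ⟨le_of_lt hx.1, le_of_lt hx.2⟩)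
  have hu_nonneg : ∀ ρ ∈ Set.Icc (0:ℝ) w, 0 ≤ u ρ := by
    intro ρ hρ
    have := humono ⟨le_refl 0, hw0⟩ hρ hρ.1
    rwa [h0] at this
  -- e^ρ (u' - u) is monotone on [0, w]
  have hgmono : MonotoneOn (fun ρ => Real.exp ρ * (deriv u ρ - u ρ)) (Set.Icc 0 w) := by
    apply monotoneOn_of_deriv_nonneg (convex_Icc _ _)
      ((Real.continuous_exp.mul (hu'.continuous.sub hu.continuous)).continuousOn)
      ((Real.differentiable_exp.mul (hu'.sub hu)).differentiableOn)
    intro x hx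
    rw [interior_Icc] at hx
    have hxw : x ∈ Set.Icc (0:ℝ) w := ⟨le_of_lt hx.1, le_of_lt hx.2⟩
    have hd : deriv (fun ρ => Real.exp ρ * (deriv u ρ - u ρ)) x
        = Real.exp x * (deriv u x - u x)
          + Real.exp x * (deriv (deriv u) x - deriv u x) := by
      rw [deriv_fun_mul (Real.differentiable_exp x)
        (show DifferentiableAt ℝ (fun ρ => deriv u ρ - u ρ) x from (hu'.sub hu) x), Real.deriv_exp,
        deriv_fun_sub (hu' x) (hu x)]
    show 0 ≤ deriv (fun ρ => Real.exp ρ * (deriv u ρ - u ρ)) x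
    rw [hd, hode x hxw]
    have hVx := hV x hxw
    have hux := hu_nonneg x hxw
    nlinarith [Real.exp_pos x, mul_nonneg (mul_nonneg (Real.exp_pos x).le
      (by linarith : (0:ℝ) ≤ (1 / 4 - lam + (1 / 4 + 4 * Real.pi ^ 2 * (j : ℝ) ^ 2 / ℓ ^ 2)
          * (1 / Real.cosh x ^ 2)) - 1)) hux]
  have hg1 : ∀ ρ ∈ Set.Icc (0:ℝ) w, 0 ≤ deriv u ρ - u ρ := by
    intro ρ hρ
    have h := hgmono ⟨le_refl 0, hw0⟩ hρ hρ.1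
    simp only [h0, h1, Real.exp_zero, sub_zero, mul_one, one_mul] at h
    nlinarith [Real.exp_pos ρ]
  -- e^{-ρ} u is monotone on [0, w]
  have hhmono : MonotoneOn (fun ρ => Real.exp (-ρ) * u ρ) (Set.Icc 0 w) := by
    have hdiff : Differentiable ℝ (fun ρ : ℝ => Real.exp (-ρ) * u ρ) :=
      ((Real.differentiable_exp.comp differentiable_neg).mul hu)
    apply monotoneOn_of_deriv_nonneg (convex_Icc _ _) hdiff.continuous.continuousOn
      hdiff.differentiableOn
    intro x hx
    rw [interior_Icc] at hx
    have hxw : x ∈ Set.Icc (0:ℝ) w := ⟨le_of_lt hx.1, le_of_lt hx.2⟩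
    have e1 : HasDerivAt (fun ρ : ℝ => Real.exp (-ρ)) (-Real.exp (-x)) x := by
      simpa [Function.comp_def] using (Real.hasDerivAt_exp (-x)).comp x (hasDerivAt_neg x)
    have hde : HasDerivAt (fun ρ => Real.exp (-ρ) * u ρ)
        (-Real.exp (-x) * u x + Real.exp (-x) * deriv u x) x :=
      e1.mul (hu x).hasDerivAt
    rw [hde.deriv]
    nlinarith [Real.exp_pos (-x), hg1 x hxw]
  -- pointwise inequality on [0, w-1]
  have hwm1 : (0:ℝ) ≤ w - 1 := by linarith
  have hpt : ∀ ρ ∈ Set.Icc (0:ℝ) (w - 1),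
      u ρ ^ 2 ≤ (Real.exp 1)⁻¹ ^ 2 * u (ρ + 1) ^ 2 := by
    intro ρ hρ
    have hρw : ρ ∈ Set.Icc (0:ℝ) w := ⟨hρ.1, by linarith [hρ.2]⟩
    have hρ1w : ρ + 1 ∈ Set.Icc (0:ℝ) w := ⟨by linarith [hρ.1], by linarith [hρ.2]⟩
    have hmm : Real.exp (-ρ) * u ρ ≤ Real.exp (-(ρ + 1)) * u (ρ + 1) :=
      hhmono hρw hρ1w (by linarith)
    have he : Real.exp (-(ρ + 1)) = Real.exp (-ρ) * (Real.exp 1)⁻¹ := by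
      rw [← Real.exp_neg, ← Real.exp_add]; ring_nf
    have hun : 0 ≤ u ρ := hu_nonneg ρ hρw
    have hun1 : 0 ≤ u (ρ + 1) := hu_nonneg _ hρ1w
    have hkey : u ρ ≤ (Real.exp 1)⁻¹ * u (ρ + 1) := by
      rw [he] at hmm
      have hexp := Real.exp_pos (-ρ)
      nlinarith
    nlinarith [inv_pos.mpr (Real.exp_pos 1)]
  -- integral comparison
  have hcont : Continuous (fun ρ => u ρ ^ 2) := hu.continuous.pow 2
  have hint1 : IntervalIntegrable (fun ρ => u ρ ^ 2) MeasureTheory.volume 0 (w - 1) :=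
    hcont.intervalIntegrable _ _
  have hint2 : IntervalIntegrable (fun ρ => (Real.exp 1)⁻¹ ^ 2 * u (ρ + 1) ^ 2)
      MeasureTheory.volume 0 (w - 1) :=
    (continuous_const.mul ((hu.continuous.comp (continuous_id.add continuous_const)).pow 2)).intervalIntegrable _ _
  have step1 : ∫ ρ in (0:ℝ)..(w - 1), u ρ ^ 2
      ≤ ∫ ρ in (0:ℝ)..(w - 1), (Real.exp 1)⁻¹ ^ 2 * u (ρ + 1) ^ 2 :=
    intervalIntegral.integral_mono_on hwm1 hint1 hint2 hpt
  have step2 : ∫ ρ in (0:ℝ)..(w - 1), (Real.exp 1)⁻¹ ^ 2 * u (ρ + 1) ^ 2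
      = (Real.exp 1)⁻¹ ^ 2 * ∫ ρ in (1:ℝ)..w, u ρ ^ 2 := by
    rw [intervalIntegral.integral_const_mul]
    congr 1
    have h := intervalIntegral.integral_comp_add_right (a := 0) (b := w - 1)
      (fun ρ => u ρ ^ 2) 1
    simpa using h
  have step3 : ∫ ρ in (1:ℝ)..w, u ρ ^ 2 ≤ ∫ ρ in (0:ℝ)..w, u ρ ^ 2 := by
    have hadd := intervalIntegral.integral_add_adjacent_intervals
      (a := (0:ℝ)) (b := 1) (c := w) (μ := MeasureTheory.volume)
      (hcont.intervalIntegrable _ _) (hcont.intervalIntegrable _ _)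
    have hpos : (0:ℝ) ≤ ∫ ρ in (0:ℝ)..1, u ρ ^ 2 :=
      intervalIntegral.integral_nonneg (by norm_num) (fun x _ => sq_nonneg _)
    linarith
  have hIw : (0:ℝ) ≤ ∫ ρ in (0:ℝ)..w, u ρ ^ 2 :=
    intervalIntegral.integral_nonneg hw0 (fun x _ => sq_nonneg _)
  have hepos : (0:ℝ) < Real.exp 1 ^ 2 := by positivity
  have hc : (Real.exp 1)⁻¹ ^ 2 ≤ 4 / Real.exp 1 ^ 2 := by
    rw [inv_pow, inv_eq_one_div, div_le_div_iff₀ hepos hepos]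
    nlinarith
  calc ∫ ρ in (0:ℝ)..(w - 1), u ρ ^ 2
      ≤ (Real.exp 1)⁻¹ ^ 2 * ∫ ρ in (1:ℝ)..w, u ρ ^ 2 := step2 ▸ step1
    _ ≤ (Real.exp 1)⁻¹ ^ 2 * ∫ ρ in (0:ℝ)..w, u ρ ^ 2 := by
        apply mul_le_mul_of_nonneg_left step3 (by positivity)
    _ ≤ 4 / Real.exp 1 ^ 2 * ∫ ρ in (0:ℝ)..w, u ρ ^ 2 :=
        mul_le_mul_of_nonneg_right hc hIw
end

section
/- Let 0 < ℓ ≤ 1, let λ ≥ 0, and let j be a natural number with j ≥ ⌊√λ⌋ + 1. Set w = arcsinh(1/sinh(ℓ/2)). Suppose u : ℝ → ℝ is twice differentiable and satisfies u''(ρ) = (1/4 − λ + (1/4 + 4π²j²/ℓ²)·(1/cosh²ρ))·u(ρ) for all ρ ∈ [0, w], with initial conditions u(0) = 1 and u'(0) = 0. Then ∫₀^{w−1} u(ρ)² dρ ≤ (4/e²) · ∫₀^{w} u(ρ)² dρ. -/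
open Real

private lemma mono_aux {f f' : ℝ → ℝ} (h : ∀ x, HasDerivAt f (f' x) x) {a b : ℝ}
    (h0 : ∀ x ∈ Set.Ioo a b, 0 ≤ f' x) : MonotoneOn f (Set.Icc a b) := by
  have hdiff : Differentiable ℝ f := fun x => (h x).differentiableAt
  apply monotoneOn_of_deriv_nonneg (convex_Icc a b) hdiff.continuous.continuousOn
    (fun x _ => (hdiff x).differentiableWithinAt)
  intro x hx
  rw [interior_Icc] at hx
  rw [(h x).deriv]
  exact h0 x hx

set_option maxHeartbeats 1600000 in
/-- Same as Statement 0 but with initial conditions `u 0 = 1`, `u' 0 = 0`. -/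
theorem stmt1 (ℓ lam : ℝ) (hℓ0 : 0 < ℓ) (hℓ1 : ℓ ≤ 1) (hlam : 0 ≤ lam)
    (j : ℕ) (hj : j ≥ ⌊Real.sqrt lam⌋₊ + 1)
    (w : ℝ) (hw : w = Real.arsinh (1 / Real.sinh (ℓ / 2)))
    (u : ℝ → ℝ) (hu : Differentiable ℝ u) (hu' : Differentiable ℝ (deriv u))
    (hode : ∀ ρ ∈ Set.Icc 0 w,
      deriv (deriv u) ρ =
        (1 / 4 - lam + (1 / 4 + 4 * Real.pi ^ 2 * (j : ℝ) ^ 2 / ℓ ^ 2)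
          * (1 / Real.cosh ρ ^ 2)) * u ρ)
    (h0 : u 0 = 1) (h1 : deriv u 0 = 0) :
    ∫ ρ in (0:ℝ)..(w - 1), u ρ ^ 2 ≤ 4 / Real.exp 1 ^ 2 * ∫ ρ in (0:ℝ)..w, u ρ ^ 2 := by
  have hπ := Real.pi_gt_d6
  -- basic facts about j
  have hjR : Real.sqrt lam < (j:ℝ) := by
    have ha : Real.sqrt lam < (⌊Real.sqrt lam⌋₊ : ℝ) + 1 := Nat.lt_floor_add_one _
    have hb : ((⌊Real.sqrt lam⌋₊ + 1 : ℕ) : ℝ) ≤ (j:ℝ) := by exact_mod_cast hj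
    push_cast at hb; linarith
  have hj2 : lam ≤ (j:ℝ)^2 := by
    nlinarith [Real.sq_sqrt hlam, Real.sqrt_nonneg lam]
  have hj1 : (1:ℝ) ≤ (j:ℝ) := by
    have : 1 ≤ j := le_trans (Nat.le_add_left 1 _) hj
    exact_mod_cast this
  -- basic facts about sinh, w
  have hsℓ : 0 < Real.sinh (ℓ/2) := Real.sinh_pos_iff.2 (by linarith)
  have hsℓ2 : ℓ/2 ≤ Real.sinh (ℓ/2) := Real.self_le_sinh_iff.2 (by linarith)
  have hw1 : (1:ℝ) ≤ w := by
    have hsinh_half : Real.sinh (ℓ/2) ≤ Real.sinh (1/2) := Real.sinh_le_sinh.2 (by linarith)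
    have hkey : Real.sinh (1/2) * Real.sinh 1 ≤ 1 := by
      have hE := Real.exp_one_lt_d9
      have haa : Real.exp (1/2) * Real.exp (1/2) = Real.exp 1 := by
        rw [← Real.exp_add]; norm_num
      have ha1 : (1:ℝ) ≤ Real.exp (1/2) := Real.one_le_exp (by norm_num)
      have ha2 : Real.exp (1/2) ≤ 1.65 := by nlinarith
      have hs1 : Real.sinh (1:ℝ) ≤ Real.exp 1 / 2 := by
        rw [Real.sinh_eq]
        have := Real.exp_pos (-1 : ℝ)
        linarith
      have hs2 : Real.sinh (1/2 : ℝ) ≤ (Real.exp (1/2) - 1 / Real.exp (1/2)) / 2 := by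
        rw [Real.sinh_eq, Real.exp_neg]
        rw [inv_eq_one_div]
      have hs2' : 0 ≤ Real.sinh (1/2 : ℝ) := Real.sinh_nonneg_iff.2 (by norm_num)
      have hinv : (0.6:ℝ) ≤ 1 / Real.exp (1/2) := by
        rw [le_div_iff₀ (Real.exp_pos _)]
        nlinarith
      have hs1nn : 0 ≤ Real.sinh (1:ℝ) := Real.sinh_nonneg_iff.2 (by norm_num)
      have hsa : Real.sinh (1/2 : ℝ) ≤ 0.525 := by linarith
      have hsb : Real.sinh (1:ℝ) ≤ 1.36 := by linarith
      calc Real.sinh (1/2) * Real.sinh 1 ≤ 0.525 * 1.36 :=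
            mul_le_mul hsa hsb hs1nn (by norm_num)
        _ ≤ 1 := by norm_num
    have hle : Real.sinh 1 ≤ 1 / Real.sinh (ℓ/2) := by
      rw [le_div_iff₀ hsℓ]
      have hs1nn : 0 ≤ Real.sinh (1:ℝ) := Real.sinh_nonneg_iff.2 (by norm_num)
      nlinarith
    have harsinh := Real.arsinh_le_arsinh.2 hle
    rw [Real.arsinh_sinh] at harsinh
    rw [hw]
    exact harsinh
  have hwpos : 0 < w := lt_of_lt_of_le one_pos hw1
  have hsinhw : Real.sinh w = 1 / Real.sinh (ℓ/2) := by rw [hw, Real.sinh_arsinh]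
  -- cosh bound on [0, w]
  have hcosh : ∀ ρ ∈ Set.Icc (0:ℝ) w, Real.cosh ρ^2 ≤ 1 + 4/ℓ^2 := by
    intro ρ hρ
    have ha : Real.sinh ρ ≤ Real.sinh w := Real.sinh_le_sinh.2 hρ.2
    have hb : 0 ≤ Real.sinh ρ := Real.sinh_nonneg_iff.2 hρ.1
    have hc : Real.sinh w ≤ 2/ℓ := by
      rw [hsinhw, div_le_div_iff₀ hsℓ hℓ0]
      linarith
    have hd := Real.cosh_sq ρ
    have he : Real.sinh ρ ^ 2 ≤ (2/ℓ)^2 := by nlinarith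
    have hf : (2/ℓ)^2 = 4/ℓ^2 := by rw [div_pow]; norm_num
    linarith
  -- potential bound
  have hV : ∀ ρ ∈ Set.Icc (0:ℝ) w,
      1 ≤ 1/4 - lam + (1/4 + 4*Real.pi^2*(j:ℝ)^2/ℓ^2) * (1/Real.cosh ρ^2) := by
    intro ρ hρ
    have hc := hcosh ρ hρ
    have hc1 : 1 ≤ Real.cosh ρ := Real.one_le_cosh ρ
    have hcpos : (0:ℝ) < Real.cosh ρ^2 := by positivity
    have hℓ2 : (0:ℝ) < ℓ^2 := by positivity
    have h6 : (3/4 + lam)*(ℓ^2+4) ≤ ℓ^2/4 + 4*Real.pi^2*(j:ℝ)^2 := by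
      have hπ2 : (9.86:ℝ) ≤ Real.pi^2 := by nlinarith [hπ, sq_nonneg (Real.pi - 3.141592)]
      have hjsq : (1:ℝ) ≤ (j:ℝ)^2 := by
        calc (1:ℝ) = 1^2 := by norm_num
          _ ≤ (j:ℝ)^2 := pow_le_pow_left₀ (by norm_num) hj1 2
      have hj2' : 1 + lam ≤ 2*(j:ℝ)^2 := by linarith
      have hℓsq : ℓ^2 ≤ 1 := by nlinarith [hℓ0, hℓ1]
      have hml : lam*ℓ^2 ≤ lam := by nlinarith [mul_le_mul_of_nonneg_left hℓsq hlam]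
      have hkey2 : (9.86:ℝ)*(1+lam) ≤ Real.pi^2*(2*(j:ℝ)^2) :=
        mul_le_mul hπ2 hj2' (by linarith) (sq_nonneg _)
      nlinarith [hkey2, hml, hℓsq, hlam]
    have h7 : (3/4 + lam) * Real.cosh ρ^2 ≤ 1/4 + 4*Real.pi^2*(j:ℝ)^2/ℓ^2 := by
      have h5 : (3/4+lam) * Real.cosh ρ^2 ≤ (3/4+lam)*(1+4/ℓ^2) := by nlinarith
      have e1 : (3/4+lam)*(1+4/ℓ^2) = (3/4+lam)*(ℓ^2+4)/ℓ^2 := by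
        field_simp
      have e2 : (1/4 + 4*Real.pi^2*(j:ℝ)^2/ℓ^2) = (ℓ^2/4 + 4*Real.pi^2*(j:ℝ)^2)/ℓ^2 := by
        field_simp
      have h8 : (3/4+lam)*(ℓ^2+4)/ℓ^2 ≤ (ℓ^2/4 + 4*Real.pi^2*(j:ℝ)^2)/ℓ^2 := by gcongr
      linarith
    have h9 : (3/4 + lam) ≤ (1/4 + 4*Real.pi^2*(j:ℝ)^2/ℓ^2) * (1/Real.cosh ρ^2) := by
      rw [mul_one_div, le_div_iff₀ hcpos]
      linarith
    linarith
  -- positivity of u on [0, w]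
  have hupos : ∀ t ∈ Set.Icc (0:ℝ) w, 0 < u t := by
    by_contra hcon
    push_neg at hcon
    obtain ⟨t₀, ht₀, ht₀u⟩ := hcon
    have hScl : IsClosed {t | t ∈ Set.Icc (0:ℝ) w ∧ u t ≤ 0} :=
      IsClosed.inter isClosed_Icc (isClosed_le hu.continuous continuous_const)
    have hne : Set.Nonempty {t | t ∈ Set.Icc (0:ℝ) w ∧ u t ≤ 0} := ⟨t₀, ht₀, ht₀u⟩
    have hbdd : BddBelow {t | t ∈ Set.Icc (0:ℝ) w ∧ u t ≤ 0} :=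
      ⟨0, fun x hx => hx.1.1⟩
    set z := sInf {t | t ∈ Set.Icc (0:ℝ) w ∧ u t ≤ 0} with hz
    have hzS : z ∈ {t | t ∈ Set.Icc (0:ℝ) w ∧ u t ≤ 0} := hScl.csInf_mem hne hbdd
    have hz0 : 0 ≤ z := hzS.1.1
    have hzw : z ≤ w := hzS.1.2
    have hlt : ∀ t, 0 ≤ t → t < z → 0 < u t := by
      intro t ha hb
      by_contra h3; push_neg at h3
      have : t ∈ {t | t ∈ Set.Icc (0:ℝ) w ∧ u t ≤ 0} := ⟨⟨ha, le_trans hb.le hzw⟩, h3⟩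
      exact absurd (csInf_le hbdd this) (not_le.2 hb)
    -- deriv u is monotone on [0, z]
    have hm1 : MonotoneOn (deriv u) (Set.Icc 0 z) := by
      apply mono_aux (fun x => (hu' x).hasDerivAt)
      intro x hx
      have hx' : x ∈ Set.Icc (0:ℝ) w := ⟨hx.1.le, le_trans hx.2.le hzw⟩
      rw [hode x hx']
      have := hV x hx'
      have hux := (hlt x hx.1.le hx.2).le
      nlinarith
    have hd0 : ∀ x ∈ Set.Icc (0:ℝ) z, 0 ≤ deriv u x := by
      intro x hx
      have := hm1 (Set.left_mem_Icc.2 hz0) hx hx.1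
      rw [h1] at this; exact this
    have hm2 : MonotoneOn u (Set.Icc 0 z) := by
      apply mono_aux (fun x => (hu x).hasDerivAt)
      intro x hx
      exact hd0 x ⟨hx.1.le, hx.2.le⟩
    have := hm2 (Set.left_mem_Icc.2 hz0) (Set.right_mem_Icc.2 hz0) hz0
    rw [h0] at this
    linarith [hzS.2]
  -- nonnegativity of deriv u on [0, w]
  have hu'nonneg : ∀ t ∈ Set.Icc (0:ℝ) w, 0 ≤ deriv u t := by
    have hm : MonotoneOn (deriv u) (Set.Icc 0 w) := by
      apply mono_aux (fun x => (hu' x).hasDerivAt)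
      intro x hx
      have hx' : x ∈ Set.Icc (0:ℝ) w := ⟨hx.1.le, hx.2.le⟩
      rw [hode x hx']
      have := hV x hx'
      have hux := (hupos x hx').le
      nlinarith
    intro t ht
    have := hm (Set.left_mem_Icc.2 hwpos.le) ht ht.1
    rw [h1] at this; exact this
  -- growth estimate
  have hgrow : ∀ s ∈ Set.Icc (0:ℝ) w, ∀ t ∈ Set.Icc (0:ℝ) w, s ≤ t →
      u s * Real.exp (t - s) / 2 ≤ u t := by
    intro s hs t ht hst
    have hFd : ∀ x, HasDerivAt (fun y => Real.exp (-y) * (deriv u y + u y))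
        (Real.exp (-x) * (deriv (deriv u) x - u x)) x := by
      intro x
      have ha : HasDerivAt (fun y : ℝ => Real.exp (-y)) (-Real.exp (-x)) x := by
        simpa [Function.comp_def] using ((Real.hasDerivAt_exp (-x)).comp x (hasDerivAt_neg x))
      have hb : HasDerivAt (fun y => deriv u y + u y) (deriv (deriv u) x + deriv u x) x :=
        ((hu' x).hasDerivAt).add ((hu x).hasDerivAt)
      have := ha.mul hb
      exact this.congr_deriv (by ring)
    have hFmono : MonotoneOn (fun y => Real.exp (-y) * (deriv u y + u y)) (Set.Icc 0 w) := by
      apply mono_aux hFd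
      intro x hx
      have hx' : x ∈ Set.Icc (0:ℝ) w := ⟨hx.1.le, hx.2.le⟩
      apply mul_nonneg (Real.exp_pos _).le
      rw [hode x hx']
      nlinarith [hV x hx', (hupos x hx').le]
    have hstar : ∀ x ∈ Set.Icc s w, Real.exp (-s) * u s ≤ Real.exp (-x) * (deriv u x + u x) := by
      intro x hx
      have hx' : x ∈ Set.Icc (0:ℝ) w := ⟨le_trans hs.1 hx.1, hx.2⟩
      have ha := hFmono hs hx' hx.1
      have hb := hu'nonneg s hs
      simp only at ha
      nlinarith [Real.exp_pos (-s)]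
    have hKd : ∀ x, HasDerivAt (fun y => Real.exp y * u y - u s * Real.exp (2*y - s)/2)
        (Real.exp x * (u x + deriv u x) - u s * Real.exp (2*x - s)) x := by
      intro x
      have ha := (Real.hasDerivAt_exp x).mul ((hu x).hasDerivAt)
      have hb : HasDerivAt (fun y : ℝ => Real.exp (2*y - s)) (2 * Real.exp (2*x-s)) x := by
        have := (Real.hasDerivAt_exp (2*x-s)).comp x
          (((hasDerivAt_id x).const_mul 2).sub_const s)
        simpa [mul_comm, Function.comp_def] using this
      have := ha.sub ((hb.const_mul (u s)).div_const 2)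
      exact this.congr_deriv (by ring)
    have hKmono : MonotoneOn (fun y => Real.exp y * u y - u s * Real.exp (2*y - s)/2)
        (Set.Icc s w) := by
      apply mono_aux hKd
      intro x hx
      have hx' : x ∈ Set.Icc s w := ⟨hx.1.le, hx.2.le⟩
      have h3 := hstar x hx'
      have e1 : Real.exp (2*x) * (Real.exp (-x) * (deriv u x + u x))
          = Real.exp x * (u x + deriv u x) := by
        rw [← mul_assoc, ← Real.exp_add, show 2*x + -x = x by ring]; ring
      have e2 : Real.exp (2*x) * (Real.exp (-s) * u s) = Real.exp (2*x - s) * u s := by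
        rw [← mul_assoc, ← Real.exp_add, show 2*x + -s = 2*x - s by ring]
      have e3 := mul_le_mul_of_nonneg_left h3 (Real.exp_pos (2*x)).le
      rw [e1, e2] at e3
      linarith
    have hsw : s ∈ Set.Icc s w := Set.left_mem_Icc.2 (le_trans hst ht.2)
    have hK := hKmono hsw ⟨hst, ht.2⟩ hst
    simp only at hK
    have hus : 0 ≤ u s := (hupos s hs).le
    have e4 : Real.exp (2*t - s) = Real.exp t * Real.exp (t - s) := by
      rw [← Real.exp_add, show t + (t - s) = 2*t - s by ring]
    have e5 : Real.exp (2*s - s) = Real.exp s := by rw [show 2*s - s = s by ring]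
    rw [e4, e5] at hK
    have het := Real.exp_pos t
    have h6 : u s * Real.exp (t-s) / 2 * Real.exp t ≤ u t * Real.exp t := by
      nlinarith [mul_nonneg hus (Real.exp_pos s).le]
    exact le_of_mul_le_mul_right h6 het
  -- conclusion
  have hwm1 : (0:ℝ) ≤ w - 1 := by linarith
  have hcont2 : Continuous fun ρ => u ρ ^ 2 := (hu.continuous).pow 2
  have hptwise : ∀ ρ ∈ Set.Icc (0:ℝ) (w-1), u ρ^2 ≤ 4 / Real.exp 1 ^2 * u (ρ+1)^2 := by
    intro ρ hρ
    have hρ' : ρ ∈ Set.Icc (0:ℝ) w := ⟨hρ.1, by linarith [hρ.2]⟩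
    have hρ1 : (ρ+1) ∈ Set.Icc (0:ℝ) w := ⟨by linarith [hρ.1], by linarith [hρ.2]⟩
    have hg := hgrow ρ hρ' (ρ+1) hρ1 (by linarith)
    rw [show ρ + 1 - ρ = 1 by ring] at hg
    have hus := (hupos ρ hρ').le
    have h2 : (u ρ * Real.exp 1 / 2)^2 ≤ u (ρ+1)^2 :=
      pow_le_pow_left₀ (by positivity) hg 2
    have he := Real.exp_pos 1
    have h3 : u ρ^2 * Real.exp 1^2 / 4 ≤ u (ρ+1)^2 := by
      have : (u ρ * Real.exp 1 / 2)^2 = u ρ^2 * Real.exp 1^2 / 4 := by ring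
      linarith [this ▸ h2]
    rw [div_mul_eq_mul_div, le_div_iff₀ (by positivity : (0:ℝ) < Real.exp 1^2)]
    linarith
  have hint1 : IntervalIntegrable (fun ρ => u ρ^2) MeasureTheory.volume 0 (w-1) :=
    hcont2.intervalIntegrable _ _
  have hint2 : IntervalIntegrable (fun ρ => 4/Real.exp 1^2 * u (ρ+1)^2)
      MeasureTheory.volume 0 (w-1) := by
    apply Continuous.intervalIntegrable
    exact continuous_const.mul ((hu.continuous.comp (continuous_id.add continuous_const)).pow 2)
  have hstep1 : ∫ ρ in (0:ℝ)..(w-1), u ρ^2 ≤ ∫ ρ in (0:ℝ)..(w-1), 4/Real.exp 1^2 * u (ρ+1)^2 :=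
    intervalIntegral.integral_mono_on hwm1 hint1 hint2 hptwise
  have hstep2 : ∫ ρ in (0:ℝ)..(w-1), 4/Real.exp 1^2 * u (ρ+1)^2
      = 4/Real.exp 1^2 * ∫ ρ in (1:ℝ)..w, u ρ^2 := by
    rw [intervalIntegral.integral_const_mul]
    congr 1
    have := intervalIntegral.integral_comp_add_right (a := 0) (b := w-1)
      (f := fun ρ => u ρ^2) 1
    simpa using this
  have hstep3 : ∫ ρ in (1:ℝ)..w, u ρ^2 ≤ ∫ ρ in (0:ℝ)..w, u ρ^2 := by
    have hsplit : (∫ ρ in (0:ℝ)..1, u ρ^2) + ∫ ρ in (1:ℝ)..w, u ρ^2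
        = ∫ ρ in (0:ℝ)..w, u ρ^2 :=
      intervalIntegral.integral_add_adjacent_intervals (hcont2.intervalIntegrable _ _)
        (hcont2.intervalIntegrable _ _)
    have h01 : 0 ≤ ∫ ρ in (0:ℝ)..1, u ρ^2 :=
      intervalIntegral.integral_nonneg (by norm_num) (fun x _ => sq_nonneg _)
    linarith
  have hepos : (0:ℝ) < 4/Real.exp 1^2 := by positivity
  calc ∫ ρ in (0:ℝ)..(w-1), u ρ^2 ≤ 4/Real.exp 1^2 * ∫ ρ in (1:ℝ)..w, u ρ^2 := by
        rw [← hstep2]; exact hstep1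
    _ ≤ 4/Real.exp 1^2 * ∫ ρ in (0:ℝ)..w, u ρ^2 :=
        mul_le_mul_of_nonneg_left hstep3 hepos.le
end

section
/- Let 0 < ℓ ≤ 1, let λ ≥ 0, and let j be a natural number with j ≥ ⌊√λ⌋ + 1. Then for every ρ with 0 ≤ ρ ≤ arcsinh(1/sinh(ℓ/2)), one has 1/4 − λ + (1/4 + 4π²j²/ℓ²)·(1/cosh²ρ) ≥ 1. -/
open Real

set_option maxHeartbeats 1000000 in
/-- For `0 < ℓ ≤ 1`, `λ ≥ 0`, and a natural number `j ≥ ⌊√λ⌋ + 1`, for every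
`ρ ∈ [0, arcsinh(1/sinh(ℓ/2))]` one has
`1/4 − λ + (1/4 + 4π²j²/ℓ²)/cosh²ρ ≥ 1`. -/
theorem stmt2 (ℓ lam : ℝ) (hℓ0 : 0 < ℓ) (hℓ1 : ℓ ≤ 1) (hlam : 0 ≤ lam)
    (j : ℕ) (hj : j ≥ ⌊Real.sqrt lam⌋₊ + 1)
    (ρ : ℝ) (hρ0 : 0 ≤ ρ) (hρw : ρ ≤ Real.arsinh (1 / Real.sinh (ℓ / 2))) :
    1 / 4 - lam + (1 / 4 + 4 * Real.pi ^ 2 * (j : ℝ) ^ 2 / ℓ ^ 2)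
      * (1 / Real.cosh ρ ^ 2) ≥ 1 := by
  have hπ : (3:ℝ) < Real.pi := Real.pi_gt_three
  have hj1 : (1:ℝ) ≤ (j:ℝ) := by
    have : 1 ≤ j := le_trans (Nat.le_add_left 1 _) hj
    exact_mod_cast this
  have hlamlt : lam < (j:ℝ)^2 := by
    have h1 : Real.sqrt lam < (j:ℝ) := by
      calc Real.sqrt lam < (⌊Real.sqrt lam⌋₊ : ℝ) + 1 := Nat.lt_floor_add_one _
        _ ≤ (j:ℝ) := by exact_mod_cast hj
    nlinarith [Real.sq_sqrt hlam, Real.sqrt_nonneg lam]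
  clear hj
  set s := Real.sinh (ℓ/2) with hs
  have hs0 : 0 < s := Real.sinh_pos_iff.mpr (by linarith)
  have hsl : ℓ/2 ≤ s := Real.self_le_sinh_iff.mpr (by linarith)
  have hsu : s ≤ 3/2 := by
    have h1 : s ≤ Real.sinh (1/2) := Real.sinh_le_sinh.mpr (by linarith)
    have h2 : Real.sinh (1/2) < 3/2 := by
      rw [Real.sinh_eq]
      have he : Real.exp (1/2) * Real.exp (1/2) = Real.exp 1 := by
        rw [← Real.exp_add]; norm_num
      have he1 : Real.exp 1 < 2.7182818286 := Real.exp_one_lt_d9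
      have hep : 0 < Real.exp (1/2) := Real.exp_pos _
      have : Real.exp (1/2) < 3 := by nlinarith
      have := Real.exp_pos (-(1/2))
      linarith
    linarith
  clear_value s
  have hsinhρ : Real.sinh ρ ≤ 1/s := by
    calc Real.sinh ρ ≤ Real.sinh (Real.arsinh (1 / s)) :=
          Real.sinh_le_sinh.mpr hρw
      _ = 1/s := by rw [Real.sinh_arsinh]
  have hsinhρ0 : 0 ≤ Real.sinh ρ := by
    have := Real.sinh_le_sinh.mpr hρ0
    simpa using this
  have hcoshpos : 0 < Real.cosh ρ := Real.cosh_pos ρ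
  have hcpos : 0 < Real.cosh ρ ^ 2 := by positivity
  have hc : Real.cosh ρ ^ 2 = Real.sinh ρ ^ 2 + 1 := Real.cosh_sq ρ
  have hsne : s ≠ 0 := ne_of_gt hs0
  have hc2 : Real.cosh ρ ^ 2 ≤ 1/s^2 + 1 := by
    rw [hc]
    have : Real.sinh ρ ^ 2 ≤ (1/s)^2 := by nlinarith
    have h2 : (1/s)^2 = 1/s^2 := by field_simp
    linarith [h2 ▸ this]
  have hA : s^2/(s^2+1) ≤ 1 / Real.cosh ρ ^ 2 := by
    rw [div_le_div_iff₀ (by positivity) hcpos]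
    have hinv : s^2 * (1/s^2) = 1 := by field_simp
    nlinarith [mul_le_mul_of_nonneg_left hc2 (sq_nonneg s)]
  have hℓ2s : ℓ^2 ≤ 4*s^2 := by nlinarith
  have hs2 : s^2 ≤ 9/4 := by nlinarith
  have hℓsq1 : ℓ^2 ≤ 1 := by rw [← one_pow 2]; exact pow_le_pow_left₀ (le_of_lt hℓ0) hℓ1 2
  have hA2 : ℓ^2/13 ≤ s^2/(s^2+1) := by
    rw [div_le_div_iff₀ (by norm_num) (by positivity)]
    have h1 : ℓ^2 * s^2 ≤ s^2 := by nlinarith [sq_nonneg s]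
    nlinarith [h1, hℓ2s, sq_nonneg s]
  have hAℓ : ℓ^2/13 ≤ 1 / Real.cosh ρ ^ 2 := le_trans hA2 hA
  have hApos : 0 ≤ 1 / Real.cosh ρ ^ 2 := by positivity
  have hcoef : 0 ≤ 4 * Real.pi ^ 2 * (j:ℝ)^2 / ℓ^2 := by positivity
  have hmul : 4 * Real.pi ^ 2 * (j:ℝ)^2 / ℓ^2 * (ℓ^2/13)
      ≤ 4 * Real.pi ^ 2 * (j:ℝ)^2 / ℓ^2 * (1 / Real.cosh ρ ^ 2) :=
    mul_le_mul_of_nonneg_left hAℓ hcoef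
  have hcancel : 4 * Real.pi ^ 2 * (j:ℝ)^2 / ℓ^2 * (ℓ^2/13)
      = 4 * Real.pi ^ 2 * (j:ℝ)^2 / 13 := by
    field_simp
  rw [hcancel] at hmul
  have hquarter : 0 ≤ (1/4 : ℝ) * (1 / Real.cosh ρ ^ 2) := by positivity
  have hπ2 : (9:ℝ) < Real.pi^2 := by nlinarith
  have hjj : (1:ℝ) ≤ (j:ℝ)^2 := by nlinarith
  have key : (36:ℝ)/13 * (j:ℝ)^2 ≤ 4 * Real.pi^2 * (j:ℝ)^2 / 13 := by
    nlinarith [sq_nonneg (j:ℝ)]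
  have expand : (1/4 + 4 * Real.pi ^ 2 * (j:ℝ)^2 / ℓ^2) * (1 / Real.cosh ρ ^ 2)
      = 1/4 * (1 / Real.cosh ρ ^ 2)
        + 4 * Real.pi ^ 2 * (j:ℝ)^2 / ℓ^2 * (1 / Real.cosh ρ ^ 2) := by ring
  rw [ge_iff_le, ← sub_nonneg]
  nlinarith [hmul, hquarter, key, hlamlt, hjj]
end

section
/- For every real w ≥ 1, ∫₀^{w−1} cosh²ρ dρ ≤ (4/e²) · ∫₀^{w} cosh²ρ dρ; equivalently, (2(w−1) + sinh(2(w−1))) / (2w + sinh(2w)) ≤ 4/e². -/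
open Real

lemma cosh_sq_integral (a : ℝ) :
    ∫ ρ in (0:ℝ)..a, Real.cosh ρ ^ 2 = (2 * a + Real.sinh (2 * a)) / 4 := by
  have h : ∀ ρ ∈ Set.uIcc (0:ℝ) a,
      HasDerivAt (fun x : ℝ => x / 2 + Real.sinh (2 * x) / 4) (Real.cosh ρ ^ 2) ρ := by
    intro ρ _
    have h1 : HasDerivAt (fun x : ℝ => 2 * x) 2 ρ := by
      simpa using (hasDerivAt_id ρ).const_mul 2
    have h2 : HasDerivAt (fun x : ℝ => Real.sinh (2 * x)) (Real.cosh (2 * ρ) * 2) ρ :=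
      h1.sinh
    have h3 : HasDerivAt (fun x : ℝ => x / 2 + Real.sinh (2 * x) / 4)
        (1 / 2 + Real.cosh (2 * ρ) * 2 / 4) ρ :=
      ((hasDerivAt_id ρ).div_const 2).add (h2.div_const 4)
    convert h3 using 1
    rw [Real.cosh_two_mul, Real.sinh_sq]
    ring
  have hcont : IntervalIntegrable (fun ρ => Real.cosh ρ ^ 2) MeasureTheory.volume 0 a :=
    (Real.continuous_cosh.pow 2).intervalIntegrable 0 a
  rw [intervalIntegral.integral_eq_sub_of_hasDerivAt h hcont]
  simp [Real.sinh_zero]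
  ring

lemma key_ineq (w : ℝ) (hw : 1 ≤ w) :
    (2 * (w - 1) + Real.sinh (2 * (w - 1))) * Real.exp 2 ≤
      4 * (2 * w + Real.sinh (2 * w)) := by
  have h1 : Real.exp 2 * (2 * w - 1) ≤ Real.exp (2 * w) := by
    have := Real.add_one_le_exp (2 * w - 2)
    have hmul : Real.exp (2 * w - 2) * Real.exp 2 = Real.exp (2 * w) := by
      rw [← Real.exp_add]; ring_nf
    nlinarith [Real.exp_pos 2]
  have h2 : (0:ℝ) < Real.exp (-(2 * w)) := Real.exp_pos _
  have h3 : (2:ℝ) ≤ Real.exp 2 := by nlinarith [Real.add_one_le_exp (2:ℝ)]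
  have h4 : Real.exp (2 * (w - 1)) * Real.exp 2 = Real.exp (2 * w) := by
    rw [← Real.exp_add]; ring_nf
  have h5 : Real.exp (-(2 * (w - 1))) = Real.exp (-(2 * w)) * Real.exp 2 := by
    rw [← Real.exp_add]; ring_nf
  have h6 : Real.exp (-(2 * w)) * Real.exp (2 * w) = 1 := by
    rw [← Real.exp_add]; simp
  rw [Real.sinh_eq, Real.sinh_eq, h5]
  have hE : (0:ℝ) < Real.exp 2 := Real.exp_pos 2
  have hsq : (4:ℝ) ≤ Real.exp 2 ^ 2 := by nlinarith
  nlinarith [h1, h4, mul_nonneg h2.le (sub_nonneg.mpr hsq),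
    mul_pos hE (show (0:ℝ) < w by linarith), mul_le_mul_of_nonneg_left hw hE.le]

/-- For every real `w ≥ 1`,
`∫₀^{w−1} cosh²ρ dρ ≤ (4/e²) ∫₀^{w} cosh²ρ dρ`; equivalently,
`(2(w−1) + sinh(2(w−1))) / (2w + sinh(2w)) ≤ 4/e²`. -/
theorem stmt4 (w : ℝ) (hw : 1 ≤ w) :
    (∫ ρ in (0:ℝ)..(w - 1), Real.cosh ρ ^ 2 ≤
      4 / Real.exp 1 ^ 2 * ∫ ρ in (0:ℝ)..w, Real.cosh ρ ^ 2) ∧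
    (2 * (w - 1) + Real.sinh (2 * (w - 1))) / (2 * w + Real.sinh (2 * w)) ≤
      4 / Real.exp 1 ^ 2 := by
  have hE : Real.exp 1 ^ 2 = Real.exp 2 := by
    rw [sq, ← Real.exp_add]; norm_num
  have hEpos : (0:ℝ) < Real.exp 2 := Real.exp_pos 2
  have hkey := key_ineq w hw
  have hsinh : 0 ≤ Real.sinh (2 * w) := Real.sinh_nonneg_iff.mpr (by linarith)
  have hden : (0:ℝ) < 2 * w + Real.sinh (2 * w) := by linarith
  constructor
  · rw [cosh_sq_integral, cosh_sq_integral, hE, div_mul_div_comm,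
      div_le_div_iff₀ (by norm_num) (by positivity)]
    nlinarith
  · rw [hE, div_le_div_iff₀ hden hEpos]
    linarith
end

section
/- Let w ≥ 1 and let u : ℝ → ℝ be twice continuously differentiable with u''(ρ) ≥ u(ρ) for all ρ ∈ [0, w]. Assume either (u(0) = 0 and u'(0) = 1) or (u(0) = 1 and u'(0) = 0). Then ∫₀^{w−1} u(ρ)² dρ ≤ (4/e²) · ∫₀^{w} u(ρ)² dρ. -/
open Real

lemma monoAux5 {f f' : ℝ → ℝ} {a b : ℝ}
    (hf : ∀ t, HasDerivAt f (f' t) t)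
    (h0 : ∀ t ∈ Set.Icc a b, 0 ≤ f' t) :
    MonotoneOn f (Set.Icc a b) := by
  apply monotoneOn_of_deriv_nonneg (convex_Icc a b)
    (fun t _ => (hf t).continuousAt.continuousWithinAt)
    (fun t ht => (hf t).differentiableAt.differentiableWithinAt)
  intro t ht
  rw [interior_Icc] at ht
  rw [(hf t).deriv]
  exact h0 t ⟨ht.1.le, ht.2.le⟩

/-- Let `w ≥ 1` and let `u : ℝ → ℝ` be twice continuously differentiable with
`u'' ρ ≥ u ρ` for all `ρ ∈ [0, w]`.  Assume either (`u 0 = 0` and `u' 0 = 1`) or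
(`u 0 = 1` and `u' 0 = 0`).  Then `∫₀^{w−1} u² ≤ (4/e²) ∫₀^{w} u²`. -/
theorem stmt5 (w : ℝ) (hw : 1 ≤ w) (u : ℝ → ℝ) (hu : ContDiff ℝ 2 u)
    (hineq : ∀ ρ ∈ Set.Icc 0 w, deriv (deriv u) ρ ≥ u ρ)
    (hinit : (u 0 = 0 ∧ deriv u 0 = 1) ∨ (u 0 = 1 ∧ deriv u 0 = 0)) :
    ∫ ρ in (0:ℝ)..(w - 1), u ρ ^ 2 ≤ 4 / Real.exp 1 ^ 2 * ∫ ρ in (0:ℝ)..w, u ρ ^ 2 := by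
  have hd1 : Differentiable ℝ u := hu.differentiable (by norm_num)
  have hcd1 : ContDiff ℝ 1 (deriv u) :=
    (contDiff_succ_iff_deriv.mp (by exact_mod_cast hu : ContDiff ℝ (1+1) u)).2.2
  have hd2 : Differentiable ℝ (deriv u) := hcd1.differentiable (by norm_num)
  have hne : ∀ s : ℝ, HasDerivAt (fun t => Real.exp (-t)) (-Real.exp (-s)) s := by
    intro s
    simpa [Function.comp_def] using (Real.hasDerivAt_exp (-s)).comp s ((hasDerivAt_id s).neg)
  have hu0 : u 0 ≥ 0 := by rcases hinit with ⟨h1, _⟩ | ⟨h1, _⟩ <;> rw [h1] <;> norm_num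
  have hu'0 : deriv u 0 ≥ 0 := by rcases hinit with ⟨_, h1⟩ | ⟨_, h1⟩ <;> rw [h1] <;> norm_num
  have hsum0 : u 0 + deriv u 0 = 1 := by
    rcases hinit with ⟨h1, h2⟩ | ⟨h1, h2⟩ <;> rw [h1, h2] <;> norm_num
  -- Step 1 : u + u' ≥ 0 on [0, w]
  have step1 : ∀ t ∈ Set.Icc (0:ℝ) w, 0 ≤ u t + deriv u t := by
    have hmono : MonotoneOn (fun t => Real.exp (-t) * (u t + deriv u t)) (Set.Icc 0 w) := by
      apply monoAux5 (f' := fun t => Real.exp (-t) * (deriv (deriv u) t - u t))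
      · intro t
        have h1 : HasDerivAt (fun t => u t + deriv u t)
            (deriv u t + deriv (deriv u) t) t := ((hd1 t).hasDerivAt).add ((hd2 t).hasDerivAt)
        have := (hne t).mul h1
        refine this.congr_deriv ?_
        ring
      · intro t ht
        have := hineq t ht
        have := Real.exp_pos (-t)
        nlinarith
    intro t ht
    have h1 := hmono (Set.left_mem_Icc.mpr (le_trans zero_le_one hw)) ht ht.1
    simp only [neg_zero, Real.exp_zero, one_mul, hsum0] at h1
    nlinarith [Real.exp_pos (-t)]
  -- Step 2 : u ≥ 0 on [0, w]
  have step2 : ∀ t ∈ Set.Icc (0:ℝ) w, 0 ≤ u t := by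
    have hmono : MonotoneOn (fun t => Real.exp t * u t) (Set.Icc 0 w) := by
      apply monoAux5 (f' := fun t => Real.exp t * (u t + deriv u t))
      · intro t
        have := (Real.hasDerivAt_exp t).mul ((hd1 t).hasDerivAt)
        refine this.congr_deriv ?_
        ring
      · intro t ht
        exact mul_nonneg (Real.exp_pos t).le (step1 t ht)
    intro t ht
    have h1 := hmono (Set.left_mem_Icc.mpr (le_trans zero_le_one hw)) ht ht.1
    simp only [Real.exp_zero, one_mul] at h1
    nlinarith [Real.exp_pos t]
  -- Step 3 : u' ≥ 0 on [0, w]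
  have step3 : ∀ t ∈ Set.Icc (0:ℝ) w, 0 ≤ deriv u t := by
    have hmono : MonotoneOn (deriv u) (Set.Icc 0 w) := by
      apply monoAux5 (f' := fun t => deriv (deriv u) t)
      · intro t; exact (hd2 t).hasDerivAt
      · intro t ht; exact le_trans (step2 t ht) (hineq t ht)
    intro t ht
    exact le_trans hu'0 (hmono (Set.left_mem_Icc.mpr (le_trans zero_le_one hw)) ht ht.1)
  -- Step 4 : key inequality u (ρ + 1) ≥ (e/2) * u ρ on [0, w-1]
  have key : ∀ ρ ∈ Set.Icc (0:ℝ) (w - 1), Real.exp 1 / 2 * u ρ ≤ u (ρ + 1) := by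
    intro ρ hρ
    obtain ⟨hρ0, hρw⟩ := hρ
    have hmem : ∀ s ∈ Set.Icc (0:ℝ) 1, ρ + s ∈ Set.Icc (0:ℝ) w := by
      intro s hs
      constructor
      · linarith [hs.1]
      · linarith [hs.2]
    set A := u ρ with hA
    set B := deriv u ρ with hB
    set h : ℝ → ℝ := fun s => u (ρ + s) - A * ((Real.exp s + Real.exp (-s)) / 2)
        - B * ((Real.exp s - Real.exp (-s)) / 2) with hh
    set h' : ℝ → ℝ := fun s => deriv u (ρ + s) - A * ((Real.exp s - Real.exp (-s)) / 2)
        - B * ((Real.exp s + Real.exp (-s)) / 2) with hh'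
    have hAd : ∀ s : ℝ, HasDerivAt (fun s => u (ρ + s)) (deriv u (ρ + s)) s := by
      intro s
      simpa [Function.comp_def] using ((hd1 (ρ + s)).hasDerivAt).comp s ((hasDerivAt_id s).const_add ρ)
    have hAd' : ∀ s : ℝ, HasDerivAt (fun s => deriv u (ρ + s)) (deriv (deriv u) (ρ + s)) s := by
      intro s
      simpa [Function.comp_def] using ((hd2 (ρ + s)).hasDerivAt).comp s ((hasDerivAt_id s).const_add ρ)
    have hhd : ∀ s : ℝ, HasDerivAt h (h' s) s := by
      intro s
      have := ((hAd s).sub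
        ((((Real.hasDerivAt_exp s).add (hne s)).div_const 2).const_mul A)).sub
        ((((Real.hasDerivAt_exp s).sub (hne s)).div_const 2).const_mul B)
      refine this.congr_deriv ?_
      simp only [hh']
      ring
    have hh'd : ∀ s : ℝ, HasDerivAt h'
        (deriv (deriv u) (ρ + s) - A * ((Real.exp s + Real.exp (-s)) / 2)
          - B * ((Real.exp s - Real.exp (-s)) / 2)) s := by
      intro s
      have := ((hAd' s).sub
        ((((Real.hasDerivAt_exp s).sub (hne s)).div_const 2).const_mul A)).sub
        ((((Real.hasDerivAt_exp s).add (hne s)).div_const 2).const_mul B)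
      refine this.congr_deriv ?_
      ring
    have hstart : h 0 = 0 ∧ h' 0 = 0 := by
      constructor <;> simp [hh, hh'] <;> ring
    -- q1 := e^s (h' - h) is monotone on [0,1]
    have hq1 : ∀ s ∈ Set.Icc (0:ℝ) 1, 0 ≤ h' s - h s := by
      have hmono : MonotoneOn (fun s => Real.exp s * (h' s - h s)) (Set.Icc 0 1) := by
        apply monoAux5 (f' := fun s => Real.exp s * (deriv (deriv u) (ρ + s) - u (ρ + s)))
        · intro s
          have := (Real.hasDerivAt_exp s).mul ((hh'd s).sub (hhd s))
          refine this.congr_deriv ?_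
          simp only [Pi.sub_apply, hh, hh']
          ring
        · intro s hs
          exact mul_nonneg (Real.exp_pos s).le (sub_nonneg.mpr (hineq _ (hmem s hs)))
      intro s hs
      have h1 := hmono (Set.left_mem_Icc.mpr zero_le_one) hs hs.1
      simp only [Real.exp_zero, one_mul, hstart.1, hstart.2, sub_zero] at h1
      nlinarith [Real.exp_pos s]
    -- q2 := e^{-s} h is monotone on [0,1]
    have hq2 : 0 ≤ h 1 := by
      have hmono : MonotoneOn (fun s => Real.exp (-s) * h s) (Set.Icc 0 1) := by
        apply monoAux5 (f' := fun s => Real.exp (-s) * (h' s - h s))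
        · intro s
          have := (hne s).mul (hhd s)
          refine this.congr_deriv ?_
          ring
        · intro s hs
          exact mul_nonneg (Real.exp_pos (-s)).le (hq1 s hs)
      have h1 := hmono (Set.left_mem_Icc.mpr zero_le_one) (Set.right_mem_Icc.mpr zero_le_one)
        zero_le_one
      simp only [neg_zero, Real.exp_zero, one_mul, hstart.1] at h1
      nlinarith [Real.exp_pos (-1 : ℝ)]
    -- conclude
    have hA0 : 0 ≤ A := step2 ρ ⟨hρ0, by linarith⟩
    have hB0 : 0 ≤ B := step3 ρ ⟨hρ0, by linarith⟩
    have hexp : Real.exp 1 / 2 ≤ (Real.exp 1 + Real.exp (-1)) / 2 := by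
      have := Real.exp_pos (-1 : ℝ); linarith
    have hsinh : 0 ≤ (Real.exp 1 - Real.exp (-1)) / 2 := by
      have : Real.exp (-1 : ℝ) ≤ Real.exp 1 := Real.exp_le_exp.mpr (by norm_num)
      linarith
    have := hq2
    simp only [hh] at this
    nlinarith [mul_le_mul_of_nonneg_left hexp hA0, mul_nonneg hB0 hsinh]
  -- Step 5 : integral comparison
  have hw1 : (0:ℝ) ≤ w - 1 := by linarith
  have hcont : Continuous (fun ρ => u ρ ^ 2) := hu.continuous.pow 2
  have hcont2 : Continuous (fun ρ => 4 / Real.exp 1 ^ 2 * u (ρ + 1) ^ 2) :=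
    continuous_const.mul ((hu.continuous.comp (continuous_id.add continuous_const)).pow 2)
  have hptwise : ∀ ρ ∈ Set.Icc (0:ℝ) (w - 1),
      u ρ ^ 2 ≤ 4 / Real.exp 1 ^ 2 * u (ρ + 1) ^ 2 := by
    intro ρ hρ
    have h1 := key ρ hρ
    have h2 : 0 ≤ Real.exp 1 / 2 * u ρ :=
      mul_nonneg (by positivity) (step2 ρ ⟨hρ.1, by linarith [hρ.2]⟩)
    have h3 := mul_self_le_mul_self h2 h1
    rw [div_mul_eq_mul_div, le_div_iff₀ (by positivity)]
    nlinarith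
  have hI1 : ∫ ρ in (0:ℝ)..(w - 1), u ρ ^ 2
      ≤ ∫ ρ in (0:ℝ)..(w - 1), 4 / Real.exp 1 ^ 2 * u (ρ + 1) ^ 2 := by
    apply intervalIntegral.integral_mono_on hw1
      (hcont.intervalIntegrable 0 (w - 1)) (hcont2.intervalIntegrable 0 (w - 1)) hptwise
  have hI2 : ∫ ρ in (0:ℝ)..(w - 1), 4 / Real.exp 1 ^ 2 * u (ρ + 1) ^ 2
      = 4 / Real.exp 1 ^ 2 * ∫ ρ in (1:ℝ)..w, u ρ ^ 2 := by
    rw [intervalIntegral.integral_const_mul]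
    congr 1
    have := intervalIntegral.integral_comp_add_right (a := (0:ℝ)) (b := w - 1)
      (fun ρ => u ρ ^ 2) 1
    simpa using this
  have hI3 : ∫ ρ in (1:ℝ)..w, u ρ ^ 2 ≤ ∫ ρ in (0:ℝ)..w, u ρ ^ 2 := by
    have hsplit : (∫ ρ in (0:ℝ)..1, u ρ ^ 2) + ∫ ρ in (1:ℝ)..w, u ρ ^ 2
        = ∫ ρ in (0:ℝ)..w, u ρ ^ 2 :=
      intervalIntegral.integral_add_adjacent_intervals
        (hcont.intervalIntegrable 0 1) (hcont.intervalIntegrable 1 w)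
    have hnn : 0 ≤ ∫ ρ in (0:ℝ)..1, u ρ ^ 2 :=
      intervalIntegral.integral_nonneg zero_le_one (fun x _ => sq_nonneg _)
    linarith
  calc ∫ ρ in (0:ℝ)..(w - 1), u ρ ^ 2
      ≤ 4 / Real.exp 1 ^ 2 * ∫ ρ in (1:ℝ)..w, u ρ ^ 2 := by rw [← hI2]; exact hI1
    _ ≤ 4 / Real.exp 1 ^ 2 * ∫ ρ in (0:ℝ)..w, u ρ ^ 2 :=
        mul_le_mul_of_nonneg_left hI3 (by positivity)
end

section
/- For every real ℓ with 0 < ℓ ≤ 1, setting w = arcsinh(1/sinh(ℓ/2)), one has ℓ·cosh(w − 1) ≤ (2/e)·√5 < 2. -/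
open Real

set_option maxHeartbeats 1000000

/-- For every `0 < ℓ ≤ 1`, setting `w = arcsinh(1/sinh(ℓ/2))`, one has
`ℓ·cosh(w − 1) ≤ (2/e)·√5 < 2`. -/
theorem stmt6 (ℓ : ℝ) (hℓ0 : 0 < ℓ) (hℓ1 : ℓ ≤ 1)
    (w : ℝ) (hw : w = Real.arsinh (1 / Real.sinh (ℓ / 2))) :
    ℓ * Real.cosh (w - 1) ≤ 2 / Real.exp 1 * Real.sqrt 5 ∧
    2 / Real.exp 1 * Real.sqrt 5 < 2 := by
  have he : (0:ℝ) < Real.exp 1 := Real.exp_pos 1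
  have he3 : (2.7182818283:ℝ) < Real.exp 1 := Real.exp_one_gt_d9
  have he4 : Real.exp 1 < 2.7182818286 := Real.exp_one_lt_d9
  have hs5 : Real.sqrt 5 ^ 2 = 5 := Real.sq_sqrt (by norm_num)
  have hs5p : 0 < Real.sqrt 5 := Real.sqrt_pos.mpr (by norm_num)
  have hs5lt : Real.sqrt 5 < 2.24 := by nlinarith
  have hs5gt : 2.23 < Real.sqrt 5 := by nlinarith
  constructor
  · set s := Real.sinh (ℓ/2) with hsdef
    set c := Real.cosh (ℓ/2) with hcdef
    have hs0 : 0 < s := Real.sinh_pos_iff.mpr (by linarith)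
    have hsl : ℓ/2 < s := Real.self_lt_sinh_iff.mpr (by linarith)
    have hc1 : 1 ≤ c := Real.one_le_cosh _
    have hcs : c^2 = 1 + s^2 := Real.cosh_sq' (ℓ/2)
    -- bound on s via sinh(1/2)
    have hshalf : s ≤ Real.sinh (1/2) := Real.sinh_le_sinh.mpr (by linarith)
    -- numeric bound on sinh(1/2)
    have hu : Real.exp (1/2) * Real.exp (1/2) = Real.exp 1 := by
      rw [← Real.exp_add]; norm_num
    have hup : 0 < Real.exp (1/2) := Real.exp_pos _
    have hu1 : 1.648 < Real.exp (1/2) := by nlinarith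
    have hu2 : Real.exp (1/2) < 1.649 := by nlinarith
    have hsinhhalf : Real.sinh (1/2) < 0.522 := by
      rw [Real.sinh_eq, Real.exp_neg]
      rw [div_lt_iff₀ (by norm_num : (0:ℝ) < 2)]
      have hinv : (0.605:ℝ) < (Real.exp (1/2))⁻¹ := by
        rw [lt_inv_comm₀ (by norm_num) hup]; nlinarith
      linarith
    have hsS : s < 0.522 := lt_of_le_of_lt hshalf hsinhhalf
    have hcC : c < 1.13 := by nlinarith
    -- exp w
    have h1 : Real.sinh w = 1/s := by rw [hw, Real.sinh_arsinh]
    have h2 : Real.cosh w = c/s := by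
      rw [hw, Real.cosh_arsinh]
      rw [show (1:ℝ) + (1/s)^2 = (c/s)^2 by field_simp; nlinarith]
      exact Real.sqrt_sq (by positivity)
    have hE : Real.exp w = (1 + c)/s := by
      rw [← Real.cosh_add_sinh, h1, h2]; field_simp; ring
    have hcw : Real.cosh (w-1) = (Real.exp w / Real.exp 1 + Real.exp 1 / Real.exp w)/2 := by
      rw [Real.cosh_eq, Real.exp_sub, neg_sub, Real.exp_sub]
    have hc0 : (0:ℝ) < 1 + c := by linarith
    have hcw2 : ℓ * Real.cosh (w-1)
        = ℓ*((1+c)^2 + Real.exp 1^2*s^2)/(2*Real.exp 1*s*(1+c)) := by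
      have h2e : Real.exp 2 = Real.exp 1 ^ 2 := by rw [sq, ← Real.exp_add]; norm_num
      rw [hcw, hE]; field_simp
    rw [hcw2, div_le_iff₀ (by positivity)]
    have hls : ℓ * s ≤ 0.522 := by nlinarith
    have he2 : Real.exp 1 ^ 2 < 7.39 := by nlinarith
    have hels : Real.exp 1 ^ 2 * (ℓ * s) ≤ 3.86 := by nlinarith [mul_pos hℓ0 hs0]
    have hB : ℓ * (Real.exp 1 ^ 2 * s ^ 2) ≤ 3.86 * s := by
      nlinarith [mul_nonneg (sub_nonneg.mpr hels) hs0.le]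
    have hA : ℓ * (1+c)^2 ≤ 2*s*(1+c)^2 := by
      nlinarith [mul_nonneg (show (0:ℝ) ≤ 2*s - ℓ by linarith) (sq_nonneg (1+c))]
    have hC0 : 2*(1+c)^2 + 3.86 ≤ 4*Real.sqrt 5*(1+c) := by
      nlinarith [mul_pos hc0 hc0, mul_nonneg (show (0:ℝ) ≤ 1.13 - c by linarith) hc0.le,
        mul_nonneg (show (0:ℝ) ≤ Real.sqrt 5 - 2.23 by linarith) hc0.le]
    have hC : 2*s*(1+c)^2 + 3.86*s ≤ 4*Real.sqrt 5*s*(1+c) := by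
      nlinarith [mul_nonneg hs0.le (sub_nonneg.mpr hC0)]
    have hkey : ℓ*((1+c)^2 + Real.exp 1^2*s^2) ≤ 4*Real.sqrt 5*s*(1+c) := by
      have hexp : ℓ*((1+c)^2 + Real.exp 1^2*s^2) = ℓ*(1+c)^2 + ℓ*(Real.exp 1^2*s^2) := by ring
      linarith
    have : 2 / Real.exp 1 * Real.sqrt 5 * (2*Real.exp 1*s*(1+c))
        = 4*Real.sqrt 5*s*(1+c) := by field_simp; ring
    linarith
  · rw [div_mul_eq_mul_div, div_lt_iff₀ he]; nlinarith
end

section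
/- Let 0 < δ < 1/2 and let w be a real number with w ≥ 1/δ + 2. Then ∫₀^{w−1/δ} cosh²(δρ) dρ ≤ (4/e²) · ∫₀^{w} cosh²(δρ) dρ. -/
open Real

lemma exp_int (δ : ℝ) (hδ0 : 0 < δ) (a : ℝ) :
    ∫ ρ in (0:ℝ)..a, Real.exp (2*δ*ρ) = (Real.exp (2*δ*a) - 1) / (2*δ) := by
  have h : (2*δ) ≠ 0 := by positivity
  rw [show (fun ρ => Real.exp (2*δ*ρ)) = (fun ρ => Real.exp ((2*δ)*ρ)) from rfl]
  rw [intervalIntegral.integral_comp_mul_left (fun x => Real.exp x) h]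
  simp [integral_exp, mul_comm, div_eq_inv_mul]

lemma cosh_sq_le (t : ℝ) (ht : 0 ≤ t) : Real.cosh t ^ 2 ≤ Real.exp (2*t) := by
  have h1 : Real.cosh t ≤ Real.exp t := by
    rw [Real.cosh_eq]
    have := Real.exp_le_exp.mpr (neg_le_self ht)
    linarith
  have h2 : 0 ≤ Real.cosh t := (Real.cosh_pos t).le
  have h3 : Real.exp (2*t) = Real.exp t ^ 2 := by
    rw [two_mul, Real.exp_add, sq]
  nlinarith

lemma le_cosh_sq (t : ℝ) : Real.exp (2*t) / 4 ≤ Real.cosh t ^ 2 := by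
  have h1 : Real.exp t / 2 ≤ Real.cosh t := by
    rw [Real.cosh_eq]
    have := (Real.exp_pos (-t)).le
    linarith
  have h2 : (0:ℝ) ≤ Real.exp t / 2 := by positivity
  have h3 : Real.exp (2*t) = Real.exp t ^ 2 := by
    rw [two_mul, Real.exp_add, sq]
  nlinarith

/-- Let `0 < δ < 1/2` and let `w ≥ 1/δ + 2`.  Then
`∫₀^{w−1/δ} cosh²(δρ) dρ ≤ (4/e²) ∫₀^{w} cosh²(δρ) dρ`. -/
theorem stmt7 (δ : ℝ) (hδ0 : 0 < δ) (hδ1 : δ < 1 / 2)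
    (w : ℝ) (hw : w ≥ 1 / δ + 2) :
    ∫ ρ in (0:ℝ)..(w - 1 / δ), Real.cosh (δ * ρ) ^ 2 ≤
      4 / Real.exp 1 ^ 2 * ∫ ρ in (0:ℝ)..w, Real.cosh (δ * ρ) ^ 2 := by
  have hδinv : 0 < 1/δ := by positivity
  have ha : (0:ℝ) ≤ w - 1/δ := by linarith
  have hw0 : (0:ℝ) ≤ w := by linarith
  have hcont : Continuous (fun ρ => Real.cosh (δ * ρ) ^ 2) := by continuity
  have hconte : Continuous (fun ρ => Real.exp (2*δ*ρ)) := by continuity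
  -- upper bound for LHS
  have h1 : ∫ ρ in (0:ℝ)..(w - 1/δ), Real.cosh (δ * ρ) ^ 2 ≤
      ∫ ρ in (0:ℝ)..(w - 1/δ), Real.exp (2*δ*ρ) := by
    apply intervalIntegral.integral_mono_on ha
      (hcont.intervalIntegrable _ _) (hconte.intervalIntegrable _ _)
    intro x hx
    have : (0:ℝ) ≤ δ * x := mul_nonneg hδ0.le hx.1
    have h := cosh_sq_le (δ * x) this
    rw [show 2*δ*x = 2*(δ*x) by ring]
    exact h
  -- lower bound for RHS integral
  have h2 : ∫ ρ in (0:ℝ)..w, Real.exp (2*δ*ρ) / 4 ≤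
      ∫ ρ in (0:ℝ)..w, Real.cosh (δ * ρ) ^ 2 := by
    apply intervalIntegral.integral_mono_on hw0
      ((hconte.div_const 4).intervalIntegrable _ _) (hcont.intervalIntegrable _ _)
    intro x hx
    have h := le_cosh_sq (δ * x)
    have : 2*(δ*x) = 2*δ*x := by ring
    rw [this] at h
    exact h
  have h2' : (∫ ρ in (0:ℝ)..w, Real.exp (2*δ*ρ)) / 4 ≤
      ∫ ρ in (0:ℝ)..w, Real.cosh (δ * ρ) ^ 2 := by
    rw [← intervalIntegral.integral_div]
    exact h2
  rw [exp_int δ hδ0] at h1 h2'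
  -- arithmetic
  have he2 : Real.exp 1 ^ 2 = Real.exp 2 := by
    rw [← Real.exp_nat_mul]; norm_num
  have hE : Real.exp (2*δ*(w - 1/δ)) = Real.exp (2*δ*w) / Real.exp 2 := by
    rw [← Real.exp_sub]
    congr 1
    field_simp
  have hepos : (0:ℝ) < Real.exp 2 := Real.exp_pos 2
  have he1 : (1:ℝ) ≤ Real.exp 2 := by
    have := Real.one_le_exp (by norm_num : (0:ℝ) ≤ 2); linarith
  have hgoal : (Real.exp (2*δ*(w - 1/δ)) - 1) / (2*δ) ≤
      4 / Real.exp 1 ^ 2 * ((Real.exp (2*δ*w) - 1) / (2*δ) / 4) := by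
    rw [he2, hE]
    have h2δ : (0:ℝ) < 2*δ := by positivity
    set E := Real.exp (2*δ*w) with hEdef
    have key : E / Real.exp 2 - 1 ≤ (E - 1) / Real.exp 2 := by
      rw [sub_div]
      have h : 1 / Real.exp 2 ≤ 1 := by
        rw [div_le_one hepos]; exact he1
      linarith
    have hrhs : 4 / Real.exp 2 * ((E - 1)/(2*δ)/4) = ((E - 1)/Real.exp 2)/(2*δ) := by
      field_simp
    rw [hrhs]
    exact div_le_div_of_nonneg_right key h2δ.le
  calc ∫ ρ in (0:ℝ)..(w - 1/δ), Real.cosh (δ * ρ) ^ 2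
      ≤ (Real.exp (2*δ*(w - 1/δ)) - 1) / (2*δ) := h1
    _ ≤ 4 / Real.exp 1 ^ 2 * ((Real.exp (2*δ*w) - 1) / (2*δ) / 4) := hgoal
    _ ≤ 4 / Real.exp 1 ^ 2 * ∫ ρ in (0:ℝ)..w, Real.cosh (δ * ρ) ^ 2 := by
        apply mul_le_mul_of_nonneg_left _ (by positivity)
        calc (Real.exp (2*δ*w) - 1) / (2*δ) / 4
            = (Real.exp (2*δ*w) - 1) / (2*δ) / 4 := rfl
          _ ≤ ∫ ρ in (0:ℝ)..w, Real.cosh (δ * ρ) ^ 2 := by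
              have : (Real.exp (2*δ*w) - 1) / (2*δ) / 4
                  = ((Real.exp (2*δ*w) - 1) / (2*δ)) / 4 := rfl
              linarith [h2']
end
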